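/- The set of gates {ΛZ, J(θ) for all θ ∈ [0,2π)} generates any one-qubit unitary: every 2×2 unitary matrix U can be written as a product of finitely many matrices of the form J(θ) up to a global phase. -/

import Mathlib

noncomputable section

open Matrix Complex

def Hgate : Matrix (Fin 2) (Fin 2) ℂ := ((Real.sqrt 2 : ℂ))⁻¹ • !![1, 1; 1, -1]
def Zgate (θ : ℝ) : Matrix (Fin 2) (Fin 2) ℂ := !![1, 0; 0, Complex.exp (θ * Complex.I)]
def Jgate (θ : ℝ) : Matrix (Fin 2) (Fin 2) ℂ := Hgate * Zgate θ

lemma angle_exists (z : ℂ) : ∃ θ : ℝ, 0 ≤ θ ∧ θ < 2*Real.pi ∧ (‖z‖ : ℂ) * Complex.exp (θ * Complex.I) = z := by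
  rcases le_or_gt 0 z.arg with h | h
  · exact ⟨z.arg, h, lt_of_le_of_lt (Complex.arg_le_pi z) (by linarith [Real.pi_pos]),
      Complex.norm_mul_exp_arg_mul_I z⟩
  · refine ⟨z.arg + 2*Real.pi, by linarith [Complex.neg_pi_lt_arg z], by linarith [Real.pi_pos], ?_⟩
    push_cast
    rw [add_mul, Complex.exp_add, Complex.exp_two_pi_mul_I, mul_one]
    exact Complex.norm_mul_exp_arg_mul_I z

lemma sqrt2_inv4 : (((Real.sqrt 2 : ℝ) : ℂ))⁻¹ ^ 4 = (4:ℂ)⁻¹ := by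
  have h2 : ((Real.sqrt 2 : ℝ) : ℂ) * ((Real.sqrt 2 : ℝ) : ℂ) = 2 := by
    rw [← Complex.ofReal_mul, Real.mul_self_sqrt (by norm_num : (0:ℝ) ≤ 2)]
    norm_num
  rw [inv_pow]
  rw [show (((Real.sqrt 2:ℝ):ℂ))^4 = (((Real.sqrt 2:ℝ):ℂ) * ((Real.sqrt 2:ℝ):ℂ))^2 by ring, h2]
  norm_num

lemma Jgate_eq (θ : ℝ) : Jgate θ =
    ((Real.sqrt 2 : ℂ))⁻¹ • !![1, Complex.exp (θ * Complex.I); 1, -Complex.exp (θ * Complex.I)] := by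
  rw [Jgate, Hgate, Zgate, Matrix.smul_mul]
  congr 1
  rw [Matrix.mul_fin_two]
  norm_num

lemma Jprod4 (α β γ : ℝ) :
    Jgate 0 * (Jgate α * (Jgate β * (Jgate γ * 1))) =
    (2:ℂ)⁻¹ • !![1 + Complex.exp (β*Complex.I), (1 - Complex.exp (β*Complex.I)) * Complex.exp (γ*Complex.I);
        Complex.exp (α*Complex.I) * (1 - Complex.exp (β*Complex.I)),
        Complex.exp (α*Complex.I) * (1 + Complex.exp (β*Complex.I)) * Complex.exp (γ*Complex.I)] := by
  simp only [Jgate_eq, mul_one, Matrix.smul_mul, Matrix.mul_smul, smul_smul, Matrix.mul_fin_two]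
  have h4 := sqrt2_inv4
  have h4' : (((Real.sqrt 2 : ℝ) : ℂ)) ^ 4 = 4 := by
    have := h4; rw [inv_pow] at this; exact inv_injective this
  ext i j
  fin_cases i <;> fin_cases j <;>
    simp [Matrix.smul_apply, Complex.ofReal_zero, Complex.exp_zero] <;>
    field_simp <;> ring_nf <;> rw [h4'] <;> ring

set_option maxHeartbeats 3200000 in
theorem stmt5 (U : Matrix (Fin 2) (Fin 2) ℂ) (hU : U ∈ Matrix.unitaryGroup (Fin 2) ℂ) :
    ∃ (c : ℂ) (l : List ℝ), ‖c‖ = 1 ∧ (∀ θ ∈ l, θ ∈ Set.Ico 0 (2 * Real.pi)) ∧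
      U = c • (l.map Jgate).prod := by
  have hpi := Real.pi_pos
  obtain ⟨a, b, cc, d, rfl⟩ : ∃ a b cc d, U = !![a,b;cc,d] := ⟨_,_,_,_, Matrix.eta_fin_two U⟩
  have h1 := congrFun (congrFun hU.2 0) 0
  have h2 := congrFun (congrFun hU.2 0) 1
  have h3 := congrFun (congrFun hU.2 1) 1
  have h4 := congrFun (congrFun hU.1 0) 0
  simp only [Matrix.mul_apply, Fin.sum_univ_two, Matrix.star_apply,
    Matrix.conjTranspose_apply, RCLike.star_def, Matrix.one_apply, Matrix.cons_val', Matrix.cons_val_zero,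
    Matrix.cons_val_one, Matrix.head_cons, Matrix.head_fin_const, Matrix.empty_val'] at h1 h2 h3 h4
  norm_num at h1 h2 h3 h4
  -- real relations
  have hn1 : ‖a‖ ^ 2 + ‖b‖ ^ 2 = 1 := by
    rw [Complex.sq_norm, Complex.sq_norm]
    have : ((Complex.normSq a + Complex.normSq b : ℝ) : ℂ) = 1 := by
      push_cast [← Complex.mul_conj]; exact h1
    exact_mod_cast this
  have hn4 : ‖a‖ ^ 2 + ‖cc‖ ^ 2 = 1 := by
    rw [Complex.sq_norm, Complex.sq_norm]
    have : ((Complex.normSq a + Complex.normSq cc : ℝ) : ℂ) = 1 := by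
      push_cast [← Complex.mul_conj]; linear_combination h4
    exact_mod_cast this
  have hn3 : ‖cc‖ ^ 2 + ‖d‖ ^ 2 = 1 := by
    rw [Complex.sq_norm, Complex.sq_norm]
    have : ((Complex.normSq cc + Complex.normSq d : ℝ) : ℂ) = 1 := by
      push_cast [← Complex.mul_conj]; exact h3
    exact_mod_cast this
  have habs_cc : ‖cc‖ = ‖b‖ := by
    nlinarith [norm_nonneg cc, norm_nonneg b]
  have ha1 : ‖a‖ ≤ 1 := by nlinarith [norm_nonneg b, norm_nonneg a]
  -- the angle t
  set t := Real.arccos (‖a‖) with ht_def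
  have ht0 : 0 ≤ t := Real.arccos_nonneg _
  have htpi : t ≤ Real.pi / 2 := Real.arccos_le_pi_div_two.2 (norm_nonneg a)
  have hcr : Real.cos t = ‖a‖ := Real.cos_arccos (by linarith [norm_nonneg a]) ha1
  have hsr : Real.sin t = ‖b‖ := by
    rw [ht_def, Real.sin_arccos, show 1 - ‖a‖ ^ 2 = ‖b‖ ^ 2 by linarith]
    exact Real.sqrt_sq (norm_nonneg b)
  -- phases
  obtain ⟨θa, hθa0, hθa1, hae⟩ := angle_exists a
  set cA := Complex.exp ((θa:ℝ) * Complex.I) with hcA_def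
  have hcAu : cA * (starRingEnd ℂ) cA = 1 := by
    rw [Complex.mul_conj]
    norm_cast
    rw [← Complex.sq_norm, hcA_def, Complex.norm_exp_ofReal_mul_I]; norm_num
  obtain ⟨θγ, hθγ0, hθγ1, hγe⟩ := angle_exists (Complex.I * b * (starRingEnd ℂ) cA)
  set eγ := Complex.exp ((θγ:ℝ) * Complex.I) with heγ_def
  have heγu : eγ * (starRingEnd ℂ) eγ = 1 := by
    rw [Complex.mul_conj]
    norm_cast
    rw [← Complex.sq_norm, heγ_def, Complex.norm_exp_ofReal_mul_I]; norm_num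
  have hγ2 : ((Real.sin t : ℝ) : ℂ) * eγ = Complex.I * b * (starRingEnd ℂ) cA := by
    rw [hsr]; rw [show ((‖b‖ : ℝ):ℂ) = ((‖Complex.I * b * (starRingEnd ℂ) cA‖ : ℝ):ℂ) by
      norm_cast
      simp [_root_.map_mul, Complex.norm_conj, hcA_def, Complex.norm_exp_ofReal_mul_I]]
    exact hγe
  obtain ⟨θα, hθα0, hθα1, hαe⟩ := angle_exists
    (if b = 0 then (starRingEnd ℂ) cA * (starRingEnd ℂ) eγ * d else Complex.I * cc * (starRingEnd ℂ) cA)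
  set eα := Complex.exp ((θα:ℝ) * Complex.I) with heα_def
  have heαu : eα * (starRingEnd ℂ) eα = 1 := by
    rw [Complex.mul_conj]
    norm_cast
    rw [← Complex.sq_norm, heα_def, Complex.norm_exp_ofReal_mul_I]; norm_num
  set et := Complex.exp ((t:ℝ) * Complex.I) with het_def
  have hetu : et * (starRingEnd ℂ) et = 1 := by
    rw [Complex.mul_conj]
    norm_cast
    rw [← Complex.sq_norm, het_def, Complex.norm_exp_ofReal_mul_I]; norm_num
  -- trig identities
  have het : et = ((Real.cos t : ℝ):ℂ) + ((Real.sin t : ℝ):ℂ) * Complex.I := by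
    rw [het_def, Complex.exp_mul_I, Complex.ofReal_cos, Complex.ofReal_sin]
  have hpyth : ((Real.cos t : ℝ):ℂ)^2 + ((Real.sin t : ℝ):ℂ)^2 = 1 := by
    norm_cast
    nlinarith [Real.sin_sq_add_cos_sq t]
  have hexp2t : Complex.exp (((2*t : ℝ) : ℂ) * Complex.I) = et * et := by
    rw [show (((2*t : ℝ)):ℂ) * Complex.I = (t:ℝ) * Complex.I + (t:ℝ) * Complex.I by push_cast; ring,
      Complex.exp_add, het_def]
  have hplus : 1 + et * et = 2 * et * ((Real.cos t : ℝ):ℂ) := by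
    rw [het]
    linear_combination (-1:ℂ) * hpyth + ((Real.sin t : ℝ):ℂ)^2 * Complex.I_sq
  have hminus : 1 - et * et = -(2 * Complex.I * ((Real.sin t : ℝ):ℂ) * et) := by
    rw [het]
    linear_combination (-1:ℂ) * hpyth + ((Real.sin t : ℝ):ℂ)^2 * Complex.I_sq
  -- explicit entries
  have ha_eq : a = ((Real.cos t : ℝ):ℂ) * cA := by rw [hcr]; exact hae.symm
  have hb_eq : b = -(Complex.I * cA * ((Real.sin t : ℝ):ℂ) * eγ) := by
    linear_combination Complex.I * cA * hγ2 + Complex.I^2 * b * hcAu + b * Complex.I_sq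
  -- the result
  refine ⟨cA * (starRingEnd ℂ) et, [0, θα, 2*t, θγ], ?_, ?_, ?_⟩
  · simp [hcA_def, het_def, norm_mul, Complex.norm_conj,
      Complex.norm_exp_ofReal_mul_I]
  · intro θ hθ
    simp only [List.mem_cons, List.not_mem_nil, or_false] at hθ
    rcases hθ with rfl | rfl | rfl | rfl
    · exact ⟨le_refl 0, by linarith⟩
    · exact ⟨hθα0, hθα1⟩
    · exact ⟨by linarith, by linarith⟩
    · exact ⟨hθγ0, hθγ1⟩
  · rw [show List.map Jgate [0, θα, 2*t, θγ] = [Jgate 0, Jgate θα, Jgate (2*t), Jgate θγ] from rfl]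
    rw [List.prod_cons, List.prod_cons, List.prod_cons, List.prod_cons, List.prod_nil]
    rw [Jprod4, hexp2t, smul_smul]
    have hcc_eq : cc = -(Complex.I * cA * ((Real.sin t : ℝ):ℂ) * eα) := by
      by_cases hb : b = 0
      · have hb0 : ‖b‖ = 0 := by rw [hb]; simp
        have hcc0 : cc = 0 := by
          have h : ‖cc‖ = 0 := by rw [habs_cc, hb0]
          simpa using h
        rw [hcc0, hsr, hb0]
        simp
      · rw [if_neg hb] at hαe
        have hα2 : ((Real.sin t : ℝ):ℂ) * eα = Complex.I * cc * (starRingEnd ℂ) cA := by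
          rw [hsr, ← habs_cc]
          rw [show ((‖cc‖ : ℝ):ℂ)
              = ((‖Complex.I * cc * (starRingEnd ℂ) cA‖ : ℝ):ℂ) by
            norm_cast
            simp [_root_.map_mul, Complex.norm_conj, hcA_def, Complex.norm_exp_ofReal_mul_I]]
          exact hαe
        linear_combination Complex.I * cA * hα2 + Complex.I^2 * cc * hcAu + cc * Complex.I_sq
    have hd_eq : d = cA * ((Real.cos t : ℝ):ℂ) * eα * eγ := by
      by_cases hb : b = 0
      · have hb0 : ‖b‖ = 0 := by rw [hb]; simp
        have hcc0 : ‖cc‖ = 0 := by rw [habs_cc, hb0]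
        have hd1 : ‖d‖ = 1 := by nlinarith [norm_nonneg d]
        have ha1' : ‖a‖ = 1 := by nlinarith [norm_nonneg a]
        rw [if_pos hb] at hαe
        have habsd : ‖(starRingEnd ℂ) cA * (starRingEnd ℂ) eγ * d‖ = 1 := by
          simp [_root_.map_mul, Complex.norm_conj, hcA_def, heγ_def,
            Complex.norm_exp_ofReal_mul_I, hd1]
        rw [habsd] at hαe
        norm_num at hαe
        rw [hcr, ha1']
        push_cast
        linear_combination (-(cA*eγ))*hαe - eγ*(starRingEnd ℂ) eγ*d*hcAu - d*heγu
      · have h2' : (starRingEnd ℂ) a * cc + (starRingEnd ℂ) b * d = 0 := by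
          have h := congrArg (starRingEnd ℂ) h2
          simpa using h
        have hs0 : ((Real.sin t : ℝ):ℂ) ≠ 0 := by
          rw [hsr]
          exact_mod_cast (norm_ne_zero_iff.mpr hb)
        have hca : (starRingEnd ℂ) a = ((Real.cos t : ℝ):ℂ) * (starRingEnd ℂ) cA := by
          rw [ha_eq, _root_.map_mul, Complex.conj_ofReal]
        have hcb : (starRingEnd ℂ) b
            = Complex.I * (starRingEnd ℂ) cA * ((Real.sin t : ℝ):ℂ) * (starRingEnd ℂ) eγ := by
          rw [hb_eq, map_neg, _root_.map_mul, _root_.map_mul, _root_.map_mul,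
            Complex.conj_ofReal, Complex.conj_I]
          ring
        rw [hca, hcb, hcc_eq] at h2'
        apply mul_left_cancel₀ (mul_ne_zero Complex.I_ne_zero hs0)
        linear_combination (eγ*cA)*h2'
          + (Complex.I*((Real.cos t : ℝ):ℂ)*((Real.sin t : ℝ):ℂ)*eα*eγ*cA
             - Complex.I*((Real.sin t : ℝ):ℂ)*d*(eγ*(starRingEnd ℂ) eγ))*hcAu
          - Complex.I*((Real.sin t : ℝ):ℂ)*d*heγu
    rw [← heγ_def, ← heα_def]
    ext i j
    fin_cases i <;> fin_cases j <;>
      simp only [Matrix.smul_apply, Matrix.of_apply, Matrix.cons_val', Matrix.cons_val_zero,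
        Matrix.cons_val_one, Matrix.head_cons, Matrix.head_fin_const, Matrix.empty_val',
        Matrix.cons_val_fin_one, smul_eq_mul, Fin.mk_zero, Fin.mk_one, Fin.isValue]
    · -- (0,0)
      linear_combination (-(cA * (starRingEnd ℂ) et)/2) * hplus
        - cA * ((Real.cos t : ℝ):ℂ) * hetu + ha_eq
    · -- (0,1)
      linear_combination (-(cA * (starRingEnd ℂ) et * eγ)/2) * hminus
        + Complex.I * ((Real.sin t : ℝ):ℂ) * eγ * cA * hetu + hb_eq
    · -- (1,0)
      linear_combination (-(cA * (starRingEnd ℂ) et * eα)/2) * hminus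
        + Complex.I * ((Real.sin t : ℝ):ℂ) * eα * cA * hetu + hcc_eq
    · -- (1,1)
      linear_combination (-(cA * (starRingEnd ℂ) et * eα * eγ)/2) * hplus
        - cA * ((Real.cos t : ℝ):ℂ) * eα * eγ * hetu + hd_eq
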